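/- Let R be a commutative ring in which 2 is invertible and let n ≥ 2. Every n×n unitriangular matrix A over R whose entries vanish outside the main diagonal and the first superdiagonal (i.e. A = I + Σᵢ aᵢ Eᵢ,ᵢ₊₁) is a commutator [B, C] of two matrices B, C with B² = C² = I, where B and C are upper triangular with diagonal entries ±1. -/
import Mathlib

namespace Stmt9

set_option linter.unusedSectionVars false
set_option linter.unusedVariables false
set_option maxHeartbeats 1600000

variable {R : Type*} [CommRing R] [Invertible (2 : R)] {n : ℕ}

/-- lower shift matrix -/
def Xm (R : Type*) [CommRing R] (n : ℕ) : Matrix (Fin n) (Fin n) R :=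
  Matrix.of fun i j => if (i : ℕ) = (j : ℕ) + 1 then 1 else 0

/-- alternating sign diagonal -/
def Dm (R : Type*) [CommRing R] (n : ℕ) : Matrix (Fin n) (Fin n) R :=
  Matrix.diagonal fun i => (-1 : R) ^ (i : ℕ)

/-- substitution matrix of t ↦ t/(1 - t/2) -/
def Hm (R : Type*) [CommRing R] [Invertible (2 : R)] (n : ℕ) : Matrix (Fin n) (Fin n) R :=
  Matrix.of fun i j => if (j : ℕ) ≤ (i : ℕ) then
    (((i : ℕ) - 1).choose ((i : ℕ) - (j : ℕ)) : R) * (⅟2) ^ ((i : ℕ) - (j : ℕ)) else 0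

/-- lower triangular predicate -/
def Low (M : Matrix (Fin n) (Fin n) R) : Prop := ∀ i j : Fin n, (i : ℕ) < (j : ℕ) → M i j = 0

lemma mul_X_apply (M : Matrix (Fin n) (Fin n) R) (i j : Fin n) :
    (M * Xm R n) i j = if h : (j : ℕ) + 1 < n then M i ⟨(j : ℕ) + 1, h⟩ else 0 := by
  rw [Matrix.mul_apply]
  split_ifs with h
  · have hk : ∀ k, M i k * Xm R n k j = if k = (⟨(j : ℕ) + 1, h⟩ : Fin n) then M i k else 0 := by
      intro k
      simp only [Xm, Matrix.of_apply, Fin.ext_iff, mul_ite, mul_one, mul_zero]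
    rw [Finset.sum_congr rfl fun k _ => hk k]
    simp
  · apply Finset.sum_eq_zero
    intro k _
    have : (k : ℕ) ≠ (j : ℕ) + 1 := by omega
    simp [Xm, this]

lemma X_mul_apply (M : Matrix (Fin n) (Fin n) R) (i j : Fin n) :
    (Xm R n * M) i j = if 0 < (i : ℕ) then
      M ⟨(i : ℕ) - 1, lt_of_le_of_lt (Nat.sub_le _ _) i.isLt⟩ j else 0 := by
  rw [Matrix.mul_apply]
  split_ifs with h
  · have hk : ∀ k, Xm R n i k * M k j =
        if k = (⟨(i : ℕ) - 1, lt_of_le_of_lt (Nat.sub_le _ _) i.isLt⟩ : Fin n) then M k j else 0 := by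
      intro k
      have : ((i : ℕ) = (k : ℕ) + 1) ↔ ((k : ℕ) = (i : ℕ) - 1) := by omega
      simp only [Xm, Matrix.of_apply, Fin.ext_iff, this, ite_mul, one_mul, zero_mul]
    rw [Finset.sum_congr rfl fun k _ => hk k]
    simp
  · apply Finset.sum_eq_zero
    intro k _
    have : (i : ℕ) ≠ (k : ℕ) + 1 := by omega
    simp [Xm, this]

lemma low_X : Low (Xm R n) := by
  intro i j hij
  simp only [Xm, Matrix.of_apply]
  have : (i : ℕ) ≠ (j : ℕ) + 1 := by omega
  simp [this]

lemma low_D : Low (Dm R n) := by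
  intro i j hij
  exact Matrix.diagonal_apply_ne _ (by exact fun h => absurd (congrArg Fin.val h) (by omega))

lemma low_H : Low (Hm R n) := by
  intro i j hij
  simp only [Hm, Matrix.of_apply]
  rw [if_neg (by omega)]

lemma low_one : Low (1 : Matrix (Fin n) (Fin n) R) := by
  intro i j hij
  exact Matrix.one_apply_ne (by exact fun h => absurd (congrArg Fin.val h) (by omega))

lemma Low.mul {M N : Matrix (Fin n) (Fin n) R} (hM : Low M) (hN : Low N) : Low (M * N) := by
  intro i j hij
  rw [Matrix.mul_apply]
  apply Finset.sum_eq_zero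
  intro k _
  rcases lt_or_ge (i : ℕ) (k : ℕ) with h | h
  · rw [hM i k h, zero_mul]
  · rw [hN k j (lt_of_le_of_lt h hij), mul_zero]

lemma Low.add {M N : Matrix (Fin n) (Fin n) R} (hM : Low M) (hN : Low N) : Low (M + N) := by
  intro i j hij
  rw [Matrix.add_apply, hM i j hij, hN i j hij, add_zero]

lemma Low.smul {M : Matrix (Fin n) (Fin n) R} (c : R) (hM : Low M) : Low (c • M) := by
  intro i j hij
  rw [Matrix.smul_apply, hM i j hij, smul_zero]

lemma Low.diag_mul {M N : Matrix (Fin n) (Fin n) R} (hM : Low M) (hN : Low N) (i : Fin n) :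
    (M * N) i i = M i i * N i i := by
  rw [Matrix.mul_apply]
  refine Finset.sum_eq_single i (fun k _ hk => ?_) (by simp)
  have hki : (k : ℕ) ≠ (i : ℕ) := fun h => hk (Fin.ext h)
  rcases lt_or_gt_of_ne hki with h | h
  · rw [hN k i h, mul_zero]
  · rw [hM i k h, zero_mul]


lemma Xpow_apply (k : ℕ) (i j : Fin n) :
    (Xm R n ^ k) i j = if (i : ℕ) = (j : ℕ) + k then 1 else 0 := by
  induction k generalizing j with
  | zero =>
    simp only [pow_zero, add_zero]
    by_cases h : i = j
    · subst h; simp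
    · rw [Matrix.one_apply_ne h, if_neg (fun hh => h (Fin.ext hh))]
  | succ k ih =>
    rw [pow_succ, mul_X_apply]
    by_cases h : (j : ℕ) + 1 < n
    · rw [dif_pos h, ih]
      have hv : ((⟨(j : ℕ) + 1, h⟩ : Fin n) : ℕ) = (j : ℕ) + 1 := rfl
      rw [hv]
      by_cases h2 : (i : ℕ) = (j : ℕ) + 1 + k
      · rw [if_pos h2, if_pos (by omega)]
      · rw [if_neg h2, if_neg (by omega)]
    · rw [dif_neg h, if_neg (by omega)]

lemma Xpow_n : (Xm R n) ^ n = 0 := by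
  ext i j
  rw [Xpow_apply, if_neg (by omega)]
  rfl

lemma X_nilpotent : IsNilpotent (Xm R n) := ⟨n, Xpow_n⟩

lemma D_mul_D : Dm R n * Dm R n = 1 := by
  rw [Dm, Matrix.diagonal_mul_diagonal]
  ext i j
  by_cases h : i = j
  · subst h; simp [← pow_add, ← two_mul, pow_mul]
  · rw [Matrix.diagonal_apply_ne _ h, Matrix.one_apply_ne h]

lemma DXD : Dm R n * Xm R n * Dm R n = -Xm R n := by
  ext i j
  simp only [Dm]
  rw [Matrix.mul_diagonal, Matrix.diagonal_mul]
  simp only [Xm, Matrix.of_apply, Matrix.neg_apply]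
  split_ifs with h
  · rw [h]
    have h2 : ((-1 : R)) ^ ((j : ℕ) + 1) * (-1) ^ (j : ℕ) = -1 := by
      rw [← pow_add]
      have e : (j : ℕ) + 1 + (j : ℕ) = 2 * (j : ℕ) + 1 := by ring
      rw [e, pow_succ, pow_mul]
      norm_num
    linear_combination h2
  · simp

/-- the key Pascal-type relation: (1 - ⅟2 X) H X = X H -/
lemma pascal : Hm R n * Xm R n = Xm R n * Hm R n + (⅟2 : R) • (Xm R n * (Hm R n * Xm R n)) := by
  ext i j
  simp only [Matrix.add_apply, Matrix.smul_apply, mul_X_apply, X_mul_apply, smul_eq_mul,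
    Hm, Matrix.of_apply]
  split_ifs <;> (try omega) <;> (try ring)
  · -- genuine Pascal case
    rename_i h1 h2 h3 h4 h5
    obtain ⟨p, hp⟩ : ∃ p, (i : ℕ) - 1 = p + 1 := ⟨(i : ℕ) - 2, by omega⟩
    obtain ⟨m, hm⟩ : ∃ m, (i : ℕ) - (1 + (j : ℕ)) = m + 1 := ⟨(i : ℕ) - (j : ℕ) - 2, by omega⟩
    have e2 : (i : ℕ) - 1 - (1 + (j : ℕ)) = m := by omega
    have e3 : (i : ℕ) - 1 - (j : ℕ) = m + 1 := by omega
    have e4 : (i : ℕ) - 1 - 1 = p := by omega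
    rw [e2, e3, e4, hm, hp, Nat.choose_succ_succ p m]
    push_cast
    ring
  · -- edge case j + 1 = i
    rename_i h1 h2 h3 h4 h5
    rw [show (i : ℕ) - (1 + (j : ℕ)) = 0 by omega, show (i : ℕ) - 1 - (j : ℕ) = 0 by omega]
    simp

section algebra_helpers
variable {R : Type*} [CommRing R] {A : Type*} [Ring A] [Algebra R A]

lemma commute_aeval {x y : A} (h : Commute x y) (p : Polynomial R) :
    Commute x (Polynomial.aeval y p) := by
  induction p using Polynomial.induction_on' with
  | add p q hp hq => rw [map_add]; exact hp.add_right hq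
  | monomial k a =>
    rw [Polynomial.aeval_monomial]
    have hc : Commute x (algebraMap R A a) := (Algebra.commutes a x).symm
    exact hc.mul_right (h.pow_right k)

lemma conj_pow {b x : A} (hb : b * b = 1) (k : ℕ) : b * x ^ k * b = (b * x * b) ^ k := by
  induction k with
  | zero => simpa using hb
  | succ k ih =>
    have key : b * x ^ k * b * (b * x * b) = b * x ^ k * x * b := by
      calc b * x ^ k * b * (b * x * b)
          = b * x ^ k * (b * b * (x * b)) := by simp only [mul_assoc]
        _ = b * x ^ k * (x * b) := by rw [hb, one_mul]
        _ = b * x ^ k * x * b := by simp only [mul_assoc]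
    rw [pow_succ, pow_succ, ← ih, key]
    simp only [mul_assoc]

lemma conj_aeval {b x : A} (hb : b * b = 1) (p : Polynomial R) :
    b * Polynomial.aeval x p * b = Polynomial.aeval (b * x * b) p := by
  induction p using Polynomial.induction_on' with
  | add p q hp hq => rw [map_add, map_add, ← hp, ← hq, mul_add, add_mul]
  | monomial k a =>
    rw [Polynomial.aeval_monomial, Polynomial.aeval_monomial, ← conj_pow hb]
    calc b * (algebraMap R A a * x ^ k) * b = algebraMap R A a * (b * x ^ k * b) := by
          rw [← mul_assoc, ← Algebra.commutes a b, mul_assoc, mul_assoc, mul_assoc]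
    _ = algebraMap R A a * (b * x ^ k * b) := rfl

lemma commute_invOf {x y : A} [Invertible y] (h : Commute x y) : Commute x (⅟y) := by
  calc x * ⅟y = ⅟y * y * (x * ⅟y) := by rw [invOf_mul_self, one_mul]
  _ = ⅟y * (y * x) * ⅟y := by simp only [mul_assoc]
  _ = ⅟y * (x * y) * ⅟y := by rw [← h.eq]
  _ = ⅟y * x * (y * ⅟y) := by simp only [mul_assoc]
  _ = ⅟y * x := by rw [mul_invOf_self, mul_one]

/-- square roots of 1 + X modulo X^k, by Newton iteration -/
lemma sqrt_poly (R : Type*) [CommRing R] [Invertible (2 : R)] (k : ℕ) (hk : 1 ≤ k) :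
    ∃ s c e : Polynomial R, s = 1 + Polynomial.X * c ∧
      s ^ 2 = 1 + Polynomial.X + Polynomial.X ^ k * e := by
  induction k with
  | zero => omega
  | succ k ih =>
    rcases Nat.eq_or_lt_of_le hk with h1 | h2
    · -- k + 1 = 1, i.e. k = 0
      refine ⟨1, 0, -1, by ring, ?_⟩
      have : k = 0 := by omega
      subst this
      ring
    · obtain ⟨s, c, e, hsc, hs2⟩ := ih (by omega)
      set δ : Polynomial R := Polynomial.C (⅟2 * e.coeff 0) with hδ
      have h2δ : 2 * δ = Polynomial.C (e.coeff 0) := by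
        rw [hδ, (map_ofNat Polynomial.C 2).symm,
          ← Polynomial.C_mul, ← mul_assoc, mul_invOf_self, one_mul]
      have hs0 : s.coeff 0 = 1 := by
        rw [hsc]
        simp
      have hdvd : Polynomial.X ∣ (e - Polynomial.C (e.coeff 0) * s) := by
        rw [Polynomial.X_dvd_iff]
        simp [hs0]
      obtain ⟨e1, he1⟩ := hdvd
      obtain ⟨k', hk'⟩ : ∃ k', k = k' + 1 := ⟨k - 1, by omega⟩
      refine ⟨s - Polynomial.X ^ k * δ, c - Polynomial.X ^ k' * δ, e1 + Polynomial.X ^ (k-1) * δ ^ 2, ?_, ?_⟩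
      · rw [hsc, hk']
        ring
      · have expand : (s - Polynomial.X ^ k * δ) ^ 2 =
            s ^ 2 - Polynomial.X ^ k * (2 * δ * s) + Polynomial.X ^ (2 * k) * δ ^ 2 := by
          ring
        rw [expand, hs2, h2δ]
        have e2k : (2 * k) = (k + 1) + (k - 1) := by omega
        rw [e2k]
        have : Polynomial.X ^ k * e - Polynomial.X ^ k * (Polynomial.C (e.coeff 0) * s)
            = Polynomial.X ^ (k+1) * e1 := by
          rw [← mul_sub, he1]
          ring
        calc 1 + Polynomial.X + Polynomial.X ^ k * e - Polynomial.X ^ k * (Polynomial.C (e.coeff 0) * s) +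
              Polynomial.X ^ (k + 1 + (k - 1)) * δ ^ 2
            = 1 + Polynomial.X + (Polynomial.X ^ k * e - Polynomial.X ^ k * (Polynomial.C (e.coeff 0) * s)) +
              Polynomial.X ^ (k + 1 + (k - 1)) * δ ^ 2 := by ring
        _ = 1 + Polynomial.X + Polynomial.X ^ (k+1) * e1 + Polynomial.X ^ (k + 1 + (k-1)) * δ ^ 2 := by rw [this]
        _ = 1 + Polynomial.X + Polynomial.X ^ (k + 1) * (e1 + Polynomial.X ^ (k - 1) * δ ^ 2) := by
            rw [pow_add]
            ring

end algebra_helpers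

def cj {A : Type*} [Ring A] (g : A) [Invertible g] : A →+* A where
  toFun x := ⅟g * x * g
  map_one' := by show ⅟g * 1 * g = 1; rw [mul_one, invOf_mul_self]
  map_mul' x y := by
    show ⅟g * (x * y) * g = (⅟g * x * g) * (⅟g * y * g)
    simp only [← mul_assoc]
    rw [mul_assoc (⅟g * x) g (⅟g), mul_invOf_self, mul_one]
  map_zero' := by simp
  map_add' x y := by show ⅟g * (x + y) * g = ⅟g * x * g + ⅟g * y * g; rw [mul_add, add_mul]

lemma cj_apply {A : Type*} [Ring A] (g : A) [Invertible g] (x : A) : cj g x = ⅟g * x * g := rfl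

def geom_inv {A : Type*} [Ring A] (N : A) (m : ℕ) (h : N ^ m = 0) : Invertible (1 + N) := by
  refine ⟨∑ i ∈ Finset.range m, (-N) ^ i, ?_, ?_⟩
  · have h1 := geom_sum_mul (-N) m
    rw [neg_pow, h, mul_zero, zero_sub] at h1
    have h2 : (∑ i ∈ Finset.range m, (-N) ^ i) * (-(1 + N)) = -1 := by
      rw [show -(1+N) = -N - 1 by abel, h1]
    rw [mul_neg, neg_eq_iff_eq_neg, neg_neg] at h2
    exact h2
  · have h1 := mul_geom_sum (-N) m
    rw [neg_pow, h, mul_zero, zero_sub] at h1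
    have h2 : (-(1 + N)) * (∑ i ∈ Finset.range m, (-N) ^ i) = -1 := by
      rw [show -(1+N) = -N - 1 by abel, h1]
    rw [neg_mul, neg_eq_iff_eq_neg, neg_neg] at h2
    exact h2

-- === small new lemmas ===

lemma H_diag (i : Fin n) : Hm R n i i = 1 := by simp [Hm]

lemma X_diag (i : Fin n) : Xm R n i i = 0 := by
  simp only [Xm, Matrix.of_apply]
  rw [if_neg (by omega)]

lemma low_BT {M : Matrix (Fin n) (Fin n) R} (h : Low M) :
    M.BlockTriangular (OrderDual.toDual : Fin n → (Fin n)ᵒᵈ) := by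
  intro i j hij
  exact h i j (Fin.lt_def.mp (OrderDual.toDual_lt_toDual.mp hij))

lemma BT_low {M : Matrix (Fin n) (Fin n) R}
    (h : M.BlockTriangular (OrderDual.toDual : Fin n → (Fin n)ᵒᵈ)) : Low M := by
  intro i j hij
  exact h (OrderDual.toDual_lt_toDual.mpr (Fin.lt_def.mpr hij))

noncomputable def invertibleH : Invertible (Hm R n) := by
  apply Matrix.invertibleOfIsUnitDet
  rw [Matrix.det_of_lowerTriangular _ (low_BT low_H)]
  simp [H_diag]

lemma low_aeval (p : Polynomial R) : Low (Polynomial.aeval (Xm R n) p) := by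
  induction p using Polynomial.induction_on' with
  | add p q hp hq => rw [map_add]; exact hp.add hq
  | monomial k a =>
    rw [Polynomial.aeval_monomial]
    have hpow : Low ((Xm R n) ^ k) := by
      induction k with
      | zero => simpa using low_one
      | succ k ih => rw [pow_succ]; exact ih.mul low_X
    have halg : (algebraMap R (Matrix (Fin n) (Fin n) R)) a * (Xm R n) ^ k = a • (Xm R n)^k := by
      rw [Algebra.smul_def]
    rw [halg]
    exact hpow.smul a

/-- main lemma: the Jordan block case -/
lemma jordan (hn : 1 ≤ n) :
    ∃ Bh Ch : Matrix (Fin n) (Fin n) R,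
      Bh * Bh = 1 ∧ Ch * Ch = 1 ∧ Low Bh ∧ Low Ch ∧
      (∀ i, Bh i i = (-1 : R) ^ (i : ℕ)) ∧ (∀ i, Ch i i = (-1 : R) ^ (i : ℕ)) ∧
      Bh * Ch * Bh * Ch = 1 + Xm R n := by
  classical
  set X : Matrix (Fin n) (Fin n) R := Xm R n with hX
  set D : Matrix (Fin n) (Fin n) R := Dm R n with hD
  set H : Matrix (Fin n) (Fin n) R := Hm R n with hH
  letI iH : Invertible H := invertibleH
  letI iD : Invertible D := ⟨D, D_mul_D, D_mul_D⟩
  have hXn : X ^ n = 0 := Xpow_n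
  have hsmulpow : ∀ c : R, ((c • X) ^ n : Matrix (Fin n) (Fin n) R) = 0 := by
    intro c; rw [smul_pow, hXn, smul_zero]
  letI iu : Invertible (1 + X) := geom_inv X n hXn
  letI iP : Invertible (1 + (⅟2 : R) • X) := geom_inv _ n (hsmulpow _)
  letI iQ : Invertible (1 - (⅟2 : R) • X) := by
    rw [sub_eq_add_neg]
    exact geom_inv _ n (by rw [← neg_smul]; exact hsmulpow _)
  set u : Matrix (Fin n) (Fin n) R := 1 + X with hu
  set P : Matrix (Fin n) (Fin n) R := 1 + (⅟2 : R) • X with hP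
  set Q : Matrix (Fin n) (Fin n) R := 1 - (⅟2 : R) • X with hQ
  have hiD : ⅟D = D := invOf_eq_right_inv D_mul_D
  have htwohalf : (⅟2 : R) + ⅟2 = 1 := by
    have h2 : (2 : R) * ⅟2 = 1 := mul_invOf_self 2
    calc (⅟2 : R) + ⅟2 = (1 + 1) * ⅟2 := by ring
    _ = (2 : R) * ⅟2 := by norm_num
    _ = 1 := h2
  -- commutation facts
  have hcXu : Commute X u := by
    rw [hu]; exact (Commute.one_right X).add_right (Commute.refl X)
  have hcXP : Commute X P := by
    rw [hP]; exact (Commute.one_right X).add_right ((Commute.refl X).smul_right _)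
  have hcXiu : Commute X (⅟u) := commute_invOf hcXu
  have hcXiP : Commute X (⅟P) := commute_invOf hcXP
  have hcuP : Commute u P := by
    rw [hu, hP]
    exact (Commute.one_left _).add_left hcXP
  have hciuiP : Commute (⅟u) (⅟P) := (commute_invOf ((commute_invOf hcuP).symm)).symm
  -- pascal consequence
  have E0 : Q * (H * X) = X * H := by
    rw [hQ, sub_mul, one_mul, Matrix.smul_mul]
    nth_rewrite 1 [pascal]
    abel
  -- Z := cj H X
  set Z : Matrix (Fin n) (Fin n) R := cj H X with hZ
  have cjH_smul : ∀ (c : R) (M : Matrix (Fin n) (Fin n) R), cj H (c • M) = c • cj H M := by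
    intro c M
    simp only [cj_apply, Matrix.mul_smul, Matrix.smul_mul]
  have cjH_gmul : cj H (H * X) = X * H := by
    rw [cj_apply, ← mul_assoc, invOf_mul_self, one_mul]
  have cjH_H : cj H H = H := by
    rw [cj_apply, invOf_mul_self, one_mul]
  have hZX : (1 - (⅟2 : R) • Z) * X = Z := by
    have e1 := congrArg (cj H) E0
    rw [map_mul (cj H) Q (H * X), map_mul (cj H) X H, cjH_gmul, cjH_H] at e1
    have e2 : cj H Q = 1 - (⅟2 : R) • Z := by
      rw [hQ, map_sub, map_one, cjH_smul, hZ]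
    rw [e2] at e1
    -- e1 : (1 - ⅟2 • Z) * (X * H) = Z * H
    have e3 := congrArg (fun M => M * ⅟H) e1
    simp only [mul_assoc, mul_invOf_self, mul_one] at e3
    simpa only [← mul_assoc] using e3
  have hZP : Z * P = X := by
    have h1 : X - (⅟2 : R) • (Z * X) = Z := by
      calc X - (⅟2 : R) • (Z * X) = (1 - (⅟2 : R) • Z) * X := by
            rw [sub_mul, one_mul, Matrix.smul_mul]
      _ = Z := hZX
    rw [hP, mul_add, mul_one, Matrix.mul_smul]
    exact (sub_eq_iff_eq_add.mp h1).symm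
  have hZval : Z = X * ⅟P := by
    rw [← hZP, mul_assoc, mul_invOf_self, mul_one]
  -- cj H P and cj H ⅟P
  have hcjHP : cj H P = u * ⅟P := by
    have e : cj H P = 1 + (⅟2 : R) • Z := by rw [hP, map_add, map_one, cjH_smul, hZ]
    have e4 : (1 + (⅟2 : R) • Z) * P = u := by
      rw [add_mul, one_mul, Matrix.smul_mul, hZP, hu, hP, add_assoc, ← add_smul, htwohalf,
        one_smul]
    rw [e, ← e4, mul_assoc, mul_invOf_self, mul_one]
  have hkey : (u * ⅟P) * (P * ⅟u) = 1 := by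
    rw [mul_assoc, ← mul_assoc (⅟P) P (⅟u), invOf_mul_self, one_mul, mul_invOf_self]
  have hcjHiP : cj H (⅟P) = P * ⅟u := by
    have ha1 : cj H (⅟P) * (u * ⅟P) = 1 := by
      rw [← hcjHP, ← map_mul, invOf_mul_self, map_one]
    calc cj H (⅟P) = cj H (⅟P) * ((u * ⅟P) * (P * ⅟u)) := by rw [hkey, mul_one]
    _ = (cj H (⅟P) * (u * ⅟P)) * (P * ⅟u) := by simp only [mul_assoc]
    _ = P * ⅟u := by rw [ha1, one_mul]
  -- cj D facts
  have cjD_X : cj D X = -X := by rw [cj_apply, hiD, hD, hX, DXD]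
  have cjD_smul : ∀ (c : R) (M : Matrix (Fin n) (Fin n) R), cj D (c • M) = c • cj D M := by
    intro c M
    simp only [cj_apply, Matrix.mul_smul, Matrix.smul_mul]
  have cjD_Q : cj D Q = P := by
    rw [hQ, map_sub, map_one, cjD_smul, cjD_X, smul_neg, sub_neg_eq_add, hP]
  have cjD_iQ : cj D (⅟Q) = ⅟P := by
    symm
    apply invOf_eq_left_inv
    rw [← cjD_Q, ← map_mul, invOf_mul_self, map_one]
  -- cj ⅟H fact
  letI iiH : Invertible (⅟H) := invertibleInvOf
  have cjiH_X : cj (⅟H) X = ⅟Q * X := by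
    have hHX : H * X = ⅟Q * (X * H) := by
      rw [← E0, ← mul_assoc, invOf_mul_self, one_mul]
    rw [cj_apply, invOf_invOf, hHX, mul_assoc, mul_assoc, mul_invOf_self, mul_one]
  -- the involution Bh
  set Bh : Matrix (Fin n) (Fin n) R := ⅟H * D * H with hBh
  have hBB : Bh * Bh = 1 := by
    rw [hBh]
    calc ⅟H * D * H * (⅟H * D * H) = ⅟H * (D * ((H * ⅟H) * (D * H))) := by
          simp only [mul_assoc]
    _ = ⅟H * ((D * D) * H) := by rw [mul_invOf_self, one_mul]; simp only [← mul_assoc]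
    _ = 1 := by rw [D_mul_D, one_mul, invOf_mul_self]
  have hBh_cj : ∀ x, Bh * x * Bh = cj H (cj D (cj (⅟H) x)) := by
    intro x
    simp only [cj_apply, invOf_invOf, hiD, hBh]
    simp only [← mul_assoc]
  have hBXB : Bh * X * Bh = -(X * ⅟u) := by
    have e2 : cj D (⅟Q * X) = ⅟P * -X := by rw [map_mul, cjD_iQ, cjD_X]
    have e3 : cj H (⅟P * -X) = (P * ⅟u) * -Z := by
      rw [map_mul, hcjHiP, map_neg, hZ]
    rw [hBh_cj, cjiH_X, e2, e3, hZval]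
    rw [mul_neg, neg_inj]
    calc P * ⅟u * (X * ⅟P)
        = P * (⅟u * X) * ⅟P := by simp only [mul_assoc]
      _ = P * (X * ⅟u) * ⅟P := by rw [← hcXiu.eq]
      _ = P * X * (⅟u * ⅟P) := by simp only [mul_assoc]
      _ = X * P * (⅟P * ⅟u) := by rw [← hcXP.eq, hciuiP.eq]
      _ = X * (P * ⅟P) * ⅟u := by simp only [mul_assoc]
      _ = X * ⅟u := by rw [mul_invOf_self, mul_one]
  have h1mXiu : u * (1 - X * ⅟u) = 1 := by
    calc u * (1 - X * ⅟u) = u - u * X * ⅟u := by rw [mul_sub, mul_one, mul_assoc]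
    _ = u - X * u * ⅟u := by rw [← hcXu.eq]
    _ = u - X * (u * ⅟u) := by rw [mul_assoc]
    _ = u - X := by rw [mul_invOf_self, mul_one]
    _ = 1 := by rw [hu]; abel
  have hiuval : ⅟u = 1 - X * ⅟u := invOf_eq_right_inv h1mXiu
  have hBuB : Bh * u * Bh = ⅟u := by
    calc Bh * u * Bh = Bh * Bh + Bh * X * Bh := by rw [hu, mul_add, mul_one, add_mul]
    _ = 1 - X * ⅟u := by rw [hBB, hBXB, ← sub_eq_add_neg]
    _ = ⅟u := hiuval.symm
  -- square root of u
  obtain ⟨sp, cp, ep, hsc, hs2⟩ := sqrt_poly R n hn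
  set sM : Matrix (Fin n) (Fin n) R := Polynomial.aeval X sp with hsM
  set cM : Matrix (Fin n) (Fin n) R := Polynomial.aeval X cp with hcM
  have hsM_eq : sM = 1 + X * cM := by
    rw [hsM, hsc, map_add, map_one, map_mul, Polynomial.aeval_X, hcM]
  have hsM2 : sM * sM = u := by
    have e := congrArg (Polynomial.aeval X) hs2
    rw [map_pow, map_add, map_add, map_one, Polynomial.aeval_X, map_mul, map_pow,
        Polynomial.aeval_X, hXn, zero_mul, add_zero] at e
    rw [hsM, ← pow_two, e, hu]
  -- the conjugate square root
  set Y : Matrix (Fin n) (Fin n) R := -(X * ⅟u) with hY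
  have htY : Bh * sM * Bh = Polynomial.aeval Y sp := by
    rw [hsM, conj_aeval hBB sp, hBXB]
  have hcXY : Commute X Y := by
    rw [hY]; exact ((Commute.refl X).mul_right hcXiu).neg_right
  set cY : Matrix (Fin n) (Fin n) R := Polynomial.aeval Y cp with hcY
  have ht_eq : Polynomial.aeval Y sp = 1 + Y * cY := by
    rw [hsc, map_add, map_one, map_mul, Polynomial.aeval_X, hcY]
  have hcXc : Commute X cM := by rw [hcM]; exact commute_aeval (Commute.refl X) cp
  have hcXcY : Commute X cY := by rw [hcY]; exact commute_aeval hcXY cp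
  set ν : Matrix (Fin n) (Fin n) R := Y * cY + X * cM + Y * cY * (X * cM) with hν
  have hw_eq : (Polynomial.aeval Y sp) * sM = 1 + ν := by
    rw [ht_eq, hsM_eq, hν]; noncomm_ring
  obtain ⟨z, hzeq, hzc⟩ : ∃ z, ν = X * z ∧ Commute X z := by
    refine ⟨-(⅟u * cY) + cM + -(⅟u * cY) * (X * cM), ?_, ?_⟩
    · rw [hν, hY]; noncomm_ring
    · have c1 : Commute X (⅟u * cY) := hcXiu.mul_right hcXcY
      exact (c1.neg_right.add_right hcXc).add_right
        (c1.neg_right.mul_right ((Commute.refl X).mul_right hcXc))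
  have hνpow : ν ^ n = 0 := by rw [hzeq, hzc.mul_pow, hXn, zero_mul]
  have hts : Commute (Polynomial.aeval Y sp) sM := by
    have c1 : Commute X (Polynomial.aeval Y sp) := commute_aeval hcXY sp
    rw [hsM]
    exact commute_aeval c1.symm sp
  have htt : (Polynomial.aeval Y sp) * (Polynomial.aeval Y sp) = ⅟u := by
    rw [← htY]
    have e : (Bh * sM * Bh) * (Bh * sM * Bh) = Bh * (sM * ((Bh * Bh) * (sM * Bh))) := by
      simp only [mul_assoc]
    rw [e, hBB, one_mul]
    have e2 : Bh * (sM * (sM * Bh)) = Bh * (sM * sM) * Bh := by simp only [mul_assoc]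
    rw [e2, hsM2, hBuB]
  have hww : (1 + ν) * (1 + ν) = 1 := by
    rw [← hw_eq]
    calc (Polynomial.aeval Y sp * sM) * (Polynomial.aeval Y sp * sM)
        = Polynomial.aeval Y sp * (sM * Polynomial.aeval Y sp) * sM := by simp only [mul_assoc]
    _ = Polynomial.aeval Y sp * (Polynomial.aeval Y sp * sM) * sM := by rw [← hts.eq]
    _ = (Polynomial.aeval Y sp * Polynomial.aeval Y sp) * (sM * sM) := by simp only [mul_assoc]
    _ = ⅟u * u := by rw [htt, hsM2]
    _ = 1 := invOf_mul_self u
  have hν2 : ν * (2 + ν) = 0 := by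
    have h0 : (1 + ν) * (1 + ν) = 1 + ν * (2 + ν) := by noncomm_ring
    rw [h0] at hww
    exact add_eq_left.mp hww
  have htwoM : ((2 : R) • (1 : Matrix (Fin n) (Fin n) R)) = 2 := by
    rw [← Algebra.algebraMap_eq_smul_one, map_ofNat]
  letI i1 : Invertible (1 + (⅟2 : R) • ν) := geom_inv _ n (by rw [smul_pow, hνpow, smul_zero])
  letI i2 : Invertible ((2 : R) • (1 : Matrix (Fin n) (Fin n) R)) := by
    refine ⟨(⅟2 : R) • 1, ?_, ?_⟩
    · rw [Matrix.smul_mul, one_mul, smul_smul, invOf_mul_self, one_smul]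
    · rw [Matrix.smul_mul, one_mul, smul_smul, mul_invOf_self, one_smul]
  have h2ν_eq : (2 : Matrix (Fin n) (Fin n) R) + ν = ((2 : R) • 1) * (1 + (⅟2 : R) • ν) := by
    rw [Matrix.smul_mul, one_mul, smul_add, smul_smul, mul_invOf_self, one_smul, htwoM]
  letI i3 : Invertible ((2 : Matrix (Fin n) (Fin n) R) + ν) :=
    (invertibleMul ((2 : R) • (1 : Matrix (Fin n) (Fin n) R)) (1 + (⅟2 : R) • ν)).copy _ h2ν_eq
  have hν0 : ν = 0 := by
    calc ν = ν * ((2 + ν) * ⅟(2 + ν)) := by rw [mul_invOf_self, mul_one]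
    _ = (ν * (2 + ν)) * ⅟(2 + ν) := by rw [← mul_assoc]
    _ = 0 := by rw [hν2, zero_mul]
  have hCts : (Polynomial.aeval Y sp) * sM = 1 := by rw [hw_eq, hν0, add_zero]
  -- triangularity and diagonals
  have low_iH : Low (⅟H) := by
    have hBTH := Matrix.blockTriangular_inv_of_blockTriangular (low_BT (low_H (R := R) (n := n)))
    have h2 := BT_low hBTH
    rwa [← Matrix.invOf_eq_nonsing_inv] at h2
  have low_Bh : Low Bh := by rw [hBh]; exact (low_iH.mul low_D).mul low_H
  have low_sM : Low sM := by rw [hsM, hX]; exact low_aeval sp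
  have low_cM : Low cM := by rw [hcM, hX]; exact low_aeval cp
  have d_iH : ∀ i, (⅟H) i i = 1 := by
    intro i
    have h1 : (H * ⅟H) i i = 1 := by rw [mul_invOf_self]; exact Matrix.one_apply_eq i
    rw [Low.diag_mul low_H low_iH, H_diag, one_mul] at h1
    exact h1
  have diag_Bh : ∀ i, Bh i i = (-1 : R) ^ (i : ℕ) := by
    intro i
    rw [hBh, Low.diag_mul (low_iH.mul low_D) low_H, Low.diag_mul low_iH low_D, d_iH, H_diag,
      one_mul, mul_one]
    simp [hD, Dm]
  have diag_sM : ∀ i, sM i i = 1 := by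
    intro i
    rw [hsM_eq, Matrix.add_apply, Matrix.one_apply_eq, Low.diag_mul low_X low_cM, X_diag,
      zero_mul, add_zero]
  refine ⟨Bh, Bh * sM, hBB, ?_, low_Bh, low_Bh.mul low_sM, diag_Bh, ?_, ?_⟩
  · calc (Bh * sM) * (Bh * sM) = (Bh * sM * Bh) * sM := by simp only [mul_assoc]
    _ = (Polynomial.aeval Y sp) * sM := by rw [htY]
    _ = 1 := hCts
  · intro i
    rw [Low.diag_mul low_Bh low_sM, diag_Bh, diag_sM, mul_one]
  · calc Bh * (Bh * sM) * Bh * (Bh * sM)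
        = ((Bh * Bh) * sM) * ((Bh * Bh) * sM) := by simp only [mul_assoc]
    _ = sM * sM := by rw [hBB, one_mul]
    _ = 1 + Xm R n := by rw [hsM2, hu]


-- ==== twist machinery ====

def Upp (M : Matrix (Fin n) (Fin n) R) : Prop := ∀ i j : Fin n, (j : ℕ) < (i : ℕ) → M i j = 0

lemma Upp.mul {M N : Matrix (Fin n) (Fin n) R} (hM : Upp M) (hN : Upp N) : Upp (M * N) := by
  intro i j hij
  rw [Matrix.mul_apply]
  apply Finset.sum_eq_zero
  intro k _
  rcases lt_or_ge (k : ℕ) (i : ℕ) with h | h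
  · rw [hM i k h, zero_mul]
  · rw [hN k j (lt_of_lt_of_le hij h), mul_zero]

def piF (a : ℕ → R) (i j : Fin n) : R := ∏ t ∈ Finset.Ico (i : ℕ) (j : ℕ), a t

def tw (a : ℕ → R) (M : Matrix (Fin n) (Fin n) R) : Matrix (Fin n) (Fin n) R :=
  Matrix.of fun i j => piF a i j * M i j

lemma tw_apply (a : ℕ → R) (M : Matrix (Fin n) (Fin n) R) (i j : Fin n) :
    tw a M i j = piF a i j * M i j := rfl

lemma piF_diag (a : ℕ → R) (i : Fin n) : piF a i i = 1 := by
  simp [piF]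

lemma tw_mul (a : ℕ → R) {M N : Matrix (Fin n) (Fin n) R} (hM : Upp M) (hN : Upp N) :
    tw a M * tw a N = tw a (M * N) := by
  ext i j
  rw [Matrix.mul_apply, tw_apply, Matrix.mul_apply, Finset.mul_sum]
  apply Finset.sum_congr rfl
  intro k _
  rcases lt_or_ge (k : ℕ) (i : ℕ) with h | h
  · simp [tw_apply, hM i k h]
  · rcases lt_or_ge (j : ℕ) (k : ℕ) with h2 | h2
    · simp [tw_apply, hN k j h2]
    · rw [tw_apply, tw_apply]
      have : piF a i k * piF a k j = piF a i j := Finset.prod_Ico_consecutive a h h2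
      calc piF a i k * M i k * (piF a k j * N k j)
          = (piF a i k * piF a k j) * (M i k * N k j) := by ring
      _ = piF a i j * (M i k * N k j) := by rw [this]
lemma tw_one (a : ℕ → R) : tw a (1 : Matrix (Fin n) (Fin n) R) = 1 := by
  ext i j
  by_cases h : i = j
  · subst h; rw [tw_apply, piF_diag, one_mul]
  · simp [tw_apply, Matrix.one_apply_ne h]

theorem stmt_9' {R : Type*} [CommRing R] [Invertible (2 : R)] (n : ℕ) (hn : 2 ≤ n)
    (A : Matrix (Fin n) (Fin n) R)
    (hdiag : ∀ i, A i i = 1)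
    (hsupp : ∀ i j : Fin n, j.val ≠ i.val → j.val ≠ i.val + 1 → A i j = 0) :
    ∃ B C : Matrix (Fin n) (Fin n) R,
      B * B = 1 ∧ C * C = 1 ∧
      B.BlockTriangular id ∧ C.BlockTriangular id ∧
      (∀ i, B i i = 1 ∨ B i i = -1) ∧ (∀ i, C i i = 1 ∨ C i i = -1) ∧
      A = B * C * B⁻¹ * C⁻¹ := by
  classical
  obtain ⟨Bh, Ch, hBB, hCC, lowB, lowC, dB, dC, hcomm⟩ :=
    jordan (R := R) (n := n) (by omega)
  set a : ℕ → R := fun t => if h : t + 1 < n then A ⟨t, by omega⟩ ⟨t + 1, h⟩ else 0 with ha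
  set e : Equiv.Perm (Fin n) := Fin.revPerm with he
  have hrev : ∀ i : Fin n, ((e i : Fin n) : ℕ) = n - 1 - (i : ℕ) := by
    intro i
    simp [he, Fin.rev]
    omega
  -- reversal of matrices
  have hmul : ∀ M N : Matrix (Fin n) (Fin n) R,
      (M.submatrix e e) * (N.submatrix e e) = (M * N).submatrix e e := by
    intro M N
    exact Matrix.submatrix_mul_equiv M N e e e
  have hone : ((1 : Matrix (Fin n) (Fin n) R).submatrix e e) = 1 :=
    Matrix.submatrix_one_equiv e
  have hupp : ∀ M : Matrix (Fin n) (Fin n) R, Low M → Upp (M.submatrix e e) := by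
    intro M hM i j hij
    apply hM
    rw [hrev, hrev]
    omega
  set B : Matrix (Fin n) (Fin n) R := tw a (Bh.submatrix e e) with hB
  set C : Matrix (Fin n) (Fin n) R := tw a (Ch.submatrix e e) with hC
  have uB : Upp (Bh.submatrix e e) := hupp _ lowB
  have uC : Upp (Ch.submatrix e e) := hupp _ lowC
  have hB2 : B * B = 1 := by
    rw [hB, tw_mul a uB uB, hmul, hBB, hone, tw_one]
  have hC2 : C * C = 1 := by
    rw [hC, tw_mul a uC uC, hmul, hCC, hone, tw_one]
  have hBT : ∀ M : Matrix (Fin n) (Fin n) R, Upp M → (tw a M).BlockTriangular id := by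
    intro M hM i j hij
    rw [tw_apply, hM i j (by exact hij), mul_zero]
  have hdiagB : ∀ i, B i i = 1 ∨ B i i = -1 := by
    intro i
    rw [hB, tw_apply, piF_diag, one_mul, Matrix.submatrix_apply, dB]
    rcases Nat.even_or_odd ((e i : Fin n) : ℕ) with h | h
    · left; exact h.neg_one_pow
    · right; exact h.neg_one_pow
  have hdiagC : ∀ i, C i i = 1 ∨ C i i = -1 := by
    intro i
    rw [hC, tw_apply, piF_diag, one_mul, Matrix.submatrix_apply, dC]
    rcases Nat.even_or_odd ((e i : Fin n) : ℕ) with h | h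
    · left; exact h.neg_one_pow
    · right; exact h.neg_one_pow
  refine ⟨B, C, hB2, hC2, hBT _ uB, hBT _ uC, hdiagB, hdiagC, ?_⟩
  have hBinv : B⁻¹ = B := Matrix.inv_eq_right_inv hB2
  have hCinv : C⁻¹ = C := Matrix.inv_eq_right_inv hC2
  rw [hBinv, hCinv]
  -- A = B * C * B * C
  have hprod : B * C * B * C = tw a ((Bh * Ch * Bh * Ch).submatrix e e) := by
    rw [hB, hC, tw_mul a uB uC, tw_mul a (uB.mul uC) uB, tw_mul a ((uB.mul uC).mul uB) uC,
      hmul, hmul, hmul]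
  rw [hprod, hcomm]
  -- entrywise identification of A with the twisted reversed Jordan matrix
  ext i j
  rw [tw_apply, Matrix.submatrix_apply, Matrix.add_apply]
  by_cases hij : i = j
  · subst hij
    rw [Matrix.one_apply_eq, piF_diag, hdiag]
    have : Xm R n (e i) (e i) = 0 := by
      simp only [Xm, Matrix.of_apply]
      rw [if_neg (by omega)]
    rw [this, add_zero, one_mul]
  · have h1 : (1 : Matrix (Fin n) (Fin n) R) (e i) (e j) = 0 :=
      Matrix.one_apply_ne (fun hh => hij (e.injective hh))
    rw [h1, zero_add]
    by_cases h2 : (j : ℕ) = (i : ℕ) + 1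
    · have hx : Xm R n (e i) (e j) = 1 := by
        simp only [Xm, Matrix.of_apply]
        rw [if_pos (by rw [hrev, hrev]; omega)]
      rw [hx, mul_one]
      have hπ : piF a i j = a (i : ℕ) := by
        rw [piF, h2, Finset.prod_Ico_succ_top (by omega), Finset.Ico_self,
          Finset.prod_empty, one_mul]
      rw [hπ]
      have hin : (i : ℕ) + 1 < n := by omega
      simp only [ha]
      rw [dif_pos hin]
      have e1 : (⟨(i : ℕ), by omega⟩ : Fin n) = i := Fin.ext rfl
      have e2 : (⟨(i : ℕ) + 1, hin⟩ : Fin n) = j := Fin.ext h2.symm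
      rw [e1, e2]
    · have hx : Xm R n (e i) (e j) = 0 := by
        simp only [Xm, Matrix.of_apply]
        rw [if_neg (by rw [hrev, hrev]; omega)]
      rw [hx, mul_zero]
      exact hsupp i j (fun hh => hij ((Fin.ext hh).symm)) h2


end Stmt9

theorem stmt_9 {R : Type*} [CommRing R] [Invertible (2 : R)] (n : ℕ) (hn : 2 ≤ n)
    (A : Matrix (Fin n) (Fin n) R)
    (hdiag : ∀ i, A i i = 1)
    (hsupp : ∀ i j : Fin n, j.val ≠ i.val → j.val ≠ i.val + 1 → A i j = 0) :
    ∃ B C : Matrix (Fin n) (Fin n) R,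
      B * B = 1 ∧ C * C = 1 ∧
      B.BlockTriangular id ∧ C.BlockTriangular id ∧
      (∀ i, B i i = 1 ∨ B i i = -1) ∧ (∀ i, C i i = 1 ∨ C i i = -1) ∧
      A = B * C * B⁻¹ * C⁻¹ := by
  exact Stmt9.stmt_9' n hn A hdiag hsupp
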